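/- Let H be a complex Hilbert space and A : H →L[ℂ] H a bounded self-adjoint operator with 0 ≤ re⟪A u, u⟫ for all u ∈ H, let S t := cfc (fun x : ℝ => if x = 0 then t else Real.sin (t * Real.sqrt x) / Real.sqrt x) A, and let f : ℝ → H be continuous with compact support. Define (G f)(t) := ∫_{s ∈ ℝ} (S (t − s)) (f s) ds. Then G f is twice continuously differentiable with (G f)″(t) = −A ((G f) t) for all t ∈ ℝ, and G f = u − v, where u(t) = ∫_{s ∈ Iic t} (S (t − s)) (f s) ds is the retarded solution and v(t) = −∫_{s ∈ Ici t} (S (t − s)) (f s) ds is the advanced solution of the inhomogeneous equation w″ + A w = f. -/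

import Mathlib

set_option synthInstance.maxHeartbeats 1000000
set_option maxHeartbeats 1000000

namespace AbsCausal

noncomputable def sinc (y : ℝ) : ℝ := if y = 0 then 1 else Real.sin y / y

lemma mul_sinc (y : ℝ) : y * sinc y = Real.sin y := by
  rcases eq_or_ne y 0 with rfl | h
  · simp [sinc]
  · rw [sinc, if_neg h]; field_simp

lemma abs_sinc_le_one (y : ℝ) : |sinc y| ≤ 1 := by
  rcases eq_or_ne y 0 with rfl | h
  · simp [sinc]
  · rw [sinc, if_neg h, abs_div, div_le_one (abs_pos.mpr h)]
    exact Real.abs_sin_le_abs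

lemma continuous_sinc : Continuous sinc := by
  rw [continuous_iff_continuousAt]
  intro y
  rcases eq_or_ne y 0 with rfl | h
  · have h1 : Filter.Tendsto (slope Real.sin 0) (nhdsWithin 0 {0}ᶜ) (nhds 1) := by
      have := Real.hasDerivAt_sin 0
      rw [Real.cos_zero] at this
      exact hasDerivAt_iff_tendsto_slope.mp this
    have h2 : Filter.Tendsto sinc (nhdsWithin 0 {0}ᶜ) (nhds 1) := by
      refine h1.congr' ?_
      filter_upwards [self_mem_nhdsWithin] with z hz
      have hz' : z ≠ 0 := hz
      simp [slope_def_field, sinc, hz', div_eq_mul_inv]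
    rw [ContinuousAt, ← nhdsNE_sup_pure 0, Filter.tendsto_sup]
    constructor
    · simpa [sinc] using h2
    · simpa using (tendsto_pure_nhds sinc 0)
  · have : ContinuousAt (fun z => Real.sin z / z) y :=
      (Real.continuous_sin.continuousAt).div continuousAt_id h
    refine this.congr ?_
    filter_upwards [isOpen_ne.mem_nhds h] with z hz
    simp [sinc, hz]

lemma hasDerivAt_tsinc (y t : ℝ) :
    HasDerivAt (fun u : ℝ => u * sinc (u * y)) (Real.cos (t * y)) t := by
  rcases eq_or_ne y 0 with rfl | hy
  · have : (fun u : ℝ => u * sinc (u * 0)) = fun u : ℝ => u := by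
      funext u; simp [sinc]
    rw [this]
    simpa using hasDerivAt_id' t
  · have h1 : (fun u : ℝ => Real.sin (u * y) / y) = fun u : ℝ => u * sinc (u * y) := by
      funext u
      rw [eq_comm, eq_div_iff hy, mul_right_comm, mul_sinc]
    have hs : HasDerivAt (fun u : ℝ => Real.sin (u * y)) (Real.cos (t * y) * y) t := by
      have := (Real.hasDerivAt_sin (t * y)).comp t ((hasDerivAt_id t).mul_const y)
      simpa [Function.comp_def] using this
    have h2 := hs.div_const y
    rw [mul_div_assoc, div_self hy, mul_one] at h2
    rwa [h1] at h2

lemma hasDerivAt_cosmul (y t : ℝ) :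
    HasDerivAt (fun u : ℝ => Real.cos (u * y)) (-(y ^ 2 * (t * sinc (t * y)))) t := by
  have hs : HasDerivAt (fun u : ℝ => Real.cos (u * y)) (-Real.sin (t * y) * y) t := by
    have := (Real.hasDerivAt_cos (t * y)).comp t ((hasDerivAt_id t).mul_const y)
    simpa [Function.comp_def] using this
  convert hs using 1
  have h : y ^ 2 * (t * sinc (t * y)) = y * (t * y * sinc (t * y)) := by ring
  rw [h, mul_sinc]; ring

lemma abs_cos_sub_cos (a b : ℝ) : |Real.cos a - Real.cos b| ≤ |a - b| := by
  rw [Real.cos_sub_cos, abs_mul, abs_mul]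
  have h1 : |Real.sin ((a + b) / 2)| ≤ 1 := Real.abs_sin_le_one _
  have h2 : |Real.sin ((a - b) / 2)| ≤ |(a - b) / 2| := Real.abs_sin_le_abs
  have h3 : |(a - b) / 2| = |a - b| / 2 := by rw [abs_div]; norm_num
  have h0 : |(-2 : ℝ)| = 2 := by norm_num
  rw [h0]
  nlinarith [abs_nonneg (Real.sin ((a - b) / 2)), abs_nonneg (a - b),
    abs_nonneg (Real.sin ((a + b) / 2))]

lemma abs_sin_sub_sin (a b : ℝ) : |Real.sin a - Real.sin b| ≤ |a - b| := by
  rw [Real.sin_sub_sin, abs_mul, abs_mul]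
  have h1 : |Real.cos ((a + b) / 2)| ≤ 1 := Real.abs_cos_le_one _
  have h2 : |Real.sin ((a - b) / 2)| ≤ |(a - b) / 2| := Real.abs_sin_le_abs
  have h3 : |(a - b) / 2| = |a - b| / 2 := by rw [abs_div]; norm_num
  have h0 : |(2 : ℝ)| = 2 := by norm_num
  rw [h0]
  nlinarith [abs_nonneg (Real.sin ((a - b) / 2)), abs_nonneg (a - b),
    abs_nonneg (Real.cos ((a + b) / 2))]

lemma abs_sub_le_of_mem_segment {s t r : ℝ} (h : r ∈ segment ℝ s t) : |r - s| ≤ |t - s| := by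
  obtain ⟨a, b, ha, hb, hab, rfl⟩ := h
  have ha' : a = 1 - b := by linarith
  subst ha'
  have h1 : (1 - b) • s + b • t - s = b * (t - s) := by
    simp only [smul_eq_mul]; ring
  rw [h1, abs_mul]
  have hb1 : b ≤ 1 := by linarith
  calc |b| * |t - s| = b * |t - s| := by rw [abs_of_nonneg hb]
    _ ≤ 1 * |t - s| := mul_le_mul_of_nonneg_right hb1 (abs_nonneg _)
    _ = |t - s| := one_mul _

lemma mvt_abs {f f' : ℝ → ℝ} {C s t : ℝ} (hf : ∀ r, HasDerivAt f (f' r) r)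
    (hC : ∀ r ∈ segment ℝ s t, |f' r| ≤ C) : |f t - f s| ≤ C * |t - s| := by
  have := (convex_segment s t).norm_image_sub_le_of_norm_hasDerivWithin_le
    (fun r _ => (hf r).hasDerivWithinAt) (fun r hr => by simpa [Real.norm_eq_abs] using hC r hr)
    (left_mem_segment ℝ s t) (right_mem_segment ℝ s t)
  simpa [Real.norm_eq_abs] using this

lemma taylor_g (y s t : ℝ) :
    |t * sinc (t * y) - s * sinc (s * y) - (t - s) * Real.cos (s * y)|
      ≤ |y| * (t - s) ^ 2 := by
  have hf : ∀ r : ℝ, HasDerivAt (fun r : ℝ => r * sinc (r * y) - r * Real.cos (s * y))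
      (Real.cos (r * y) - Real.cos (s * y)) r := by
    intro r
    have h2 : HasDerivAt (fun r : ℝ => r * Real.cos (s * y)) (Real.cos (s * y)) r := by
      simpa using (hasDerivAt_id r).mul_const (Real.cos (s * y))
    exact (hasDerivAt_tsinc y r).sub h2
  have key := mvt_abs (C := |y| * |t - s|) (s := s) (t := t) hf ?_
  · calc |t * sinc (t * y) - s * sinc (s * y) - (t - s) * Real.cos (s * y)|
        = |(t * sinc (t * y) - t * Real.cos (s * y)) - (s * sinc (s * y) - s * Real.cos (s * y))| := by
          congr 1; ring
      _ ≤ |y| * |t - s| * |t - s| := key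
      _ = |y| * (t - s) ^ 2 := by rw [mul_assoc, abs_mul_abs_self, sq]
  · intro r hr
    calc |Real.cos (r * y) - Real.cos (s * y)| ≤ |r * y - s * y| := abs_cos_sub_cos _ _
      _ = |r - s| * |y| := by rw [← sub_mul, abs_mul]
      _ ≤ |t - s| * |y| := mul_le_mul_of_nonneg_right (abs_sub_le_of_mem_segment hr) (abs_nonneg _)
      _ = |y| * |t - s| := mul_comm _ _

lemma taylor_c (y s t : ℝ) :
    |Real.cos (t * y) - Real.cos (s * y) + (t - s) * (y ^ 2 * (s * sinc (s * y)))|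
      ≤ y ^ 2 * (t - s) ^ 2 := by
  have hf : ∀ r : ℝ, HasDerivAt
      (fun r : ℝ => Real.cos (r * y) + r * (y ^ 2 * (s * sinc (s * y))))
      (-(y ^ 2 * (r * sinc (r * y))) + y ^ 2 * (s * sinc (s * y))) r := by
    intro r
    have h2 : HasDerivAt (fun r : ℝ => r * (y ^ 2 * (s * sinc (s * y))))
        (y ^ 2 * (s * sinc (s * y))) r := by
      simpa using (hasDerivAt_id r).mul_const (y ^ 2 * (s * sinc (s * y)))
    exact (hasDerivAt_cosmul y r).add h2
  have key := mvt_abs (C := y ^ 2 * |t - s|) (s := s) (t := t) hf ?_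
  · calc |Real.cos (t * y) - Real.cos (s * y) + (t - s) * (y ^ 2 * (s * sinc (s * y)))|
        = |(Real.cos (t * y) + t * (y ^ 2 * (s * sinc (s * y))))
            - (Real.cos (s * y) + s * (y ^ 2 * (s * sinc (s * y))))| := by congr 1; ring
      _ ≤ y ^ 2 * |t - s| * |t - s| := key
      _ = y ^ 2 * (t - s) ^ 2 := by rw [mul_assoc, abs_mul_abs_self]; ring
  · intro r hr
    have e1 : -(y ^ 2 * (r * sinc (r * y))) + y ^ 2 * (s * sinc (s * y))
        = y * (Real.sin (s * y) - Real.sin (r * y)) := by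
      have hr' : y ^ 2 * (r * sinc (r * y)) = y * (r * y * sinc (r * y)) := by ring
      have hs' : y ^ 2 * (s * sinc (s * y)) = y * (s * y * sinc (s * y)) := by ring
      rw [hr', hs', mul_sinc, mul_sinc]; ring
    rw [e1, abs_mul]
    calc |y| * |Real.sin (s * y) - Real.sin (r * y)| ≤ |y| * |s * y - r * y| :=
          mul_le_mul_of_nonneg_left (abs_sin_sub_sin _ _) (abs_nonneg _)
      _ = |y| * (|y| * |s - r|) := by rw [show s * y - r * y = y * (s - r) by ring, abs_mul]
      _ ≤ |y| * (|y| * |t - s|) := by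
          have h := abs_sub_le_of_mem_segment hr
          rw [abs_sub_comm s r]
          exact mul_le_mul_of_nonneg_left (mul_le_mul_of_nonneg_left h (abs_nonneg _)) (abs_nonneg _)
      _ = y ^ 2 * |t - s| := by rw [← mul_assoc, abs_mul_abs_self, sq]

lemma hasDerivAt_of_sq_bound {E : Type*} [NormedAddCommGroup E] [NormedSpace ℝ E]
    {F : ℝ → E} {c : E} {t K : ℝ}
    (h : ∀ t' : ℝ, ‖F t' - F t - (t' - t) • c‖ ≤ K * (t' - t) ^ 2) : HasDerivAt F c t := by
  rw [hasDerivAt_iff_isLittleO, Asymptotics.isLittleO_iff]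
  intro ε hε
  set K' := max K 0 with hK'
  have hK0 : 0 ≤ K' := le_max_right _ _
  have hδ : 0 < ε / (K' + 1) := by positivity
  filter_upwards [Metric.ball_mem_nhds t hδ] with t' ht'
  rw [Metric.mem_ball, Real.dist_eq] at ht'
  have h1 : ‖F t' - F t - (t' - t) • c‖ ≤ K' * (t' - t) ^ 2 := by
    refine (h t').trans ?_
    have := sq_nonneg (t' - t)
    nlinarith [le_max_left K (0:ℝ)]
  have h3 : K' * |t' - t| ≤ ε := by
    have hpos : (0:ℝ) < K' + 1 := by linarith
    rw [lt_div_iff₀ hpos] at ht'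
    nlinarith [abs_nonneg (t' - t)]
  calc ‖F t' - F t - (t' - t) • c‖ ≤ K' * (t' - t) ^ 2 := h1
    _ = K' * |t' - t| * |t' - t| := by rw [mul_assoc, abs_mul_abs_self, sq]
    _ ≤ ε * |t' - t| := mul_le_mul_of_nonneg_right h3 (abs_nonneg _)
    _ = ε * ‖t' - t‖ := by rw [Real.norm_eq_abs]

variable {H : Type*} [NormedAddCommGroup H] [InnerProductSpace ℂ H] [CompleteSpace H]

lemma cont_g (t : ℝ) : Continuous fun x : ℝ => t * sinc (t * Real.sqrt x) :=
  continuous_const.mul (continuous_sinc.comp (continuous_const.mul Real.continuous_sqrt))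

lemma cont_c (t : ℝ) : Continuous fun x : ℝ => Real.cos (t * Real.sqrt x) :=
  Real.continuous_cos.comp (continuous_const.mul Real.continuous_sqrt)

noncomputable def Sop (A : H →L[ℂ] H) (t : ℝ) : H →L[ℂ] H :=
  cfc (fun x : ℝ => t * sinc (t * Real.sqrt x)) A

noncomputable def Cop (A : H →L[ℂ] H) (t : ℝ) : H →L[ℂ] H :=
  cfc (fun x : ℝ => Real.cos (t * Real.sqrt x)) A

variable {A : H →L[ℂ] H} (hA : IsSelfAdjoint A)

include hA

lemma norm_Sop_le (t : ℝ) : ‖Sop A t‖ ≤ |t| := by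
  refine norm_cfc_le (abs_nonneg t) fun x _ => ?_
  rw [Real.norm_eq_abs, abs_mul]
  calc |t| * |sinc (t * Real.sqrt x)| ≤ |t| * 1 :=
        mul_le_mul_of_nonneg_left (abs_sinc_le_one _) (abs_nonneg _)
    _ = |t| := mul_one _

lemma norm_Cop_le (t : ℝ) : ‖Cop A t‖ ≤ 1 :=
  norm_cfc_le one_pos.le fun x _ => by
    rw [Real.norm_eq_abs]; exact Real.abs_cos_le_one _

lemma spec_bound : ∀ x ∈ spectrum ℝ A, |x| ≤ ‖A‖ * ‖(1 : H →L[ℂ] H)‖ := fun x hx => by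
  simpa [Real.norm_eq_abs] using spectrum.norm_le_norm_mul_of_mem hx

lemma key1 (s t : ℝ) :
    ‖Sop A t - Sop A s - (t - s) • Cop A s‖
      ≤ Real.sqrt (‖A‖ * ‖(1 : H →L[ℂ] H)‖) * (t - s) ^ 2 := by
  have e1 : Sop A t - Sop A s - (t - s) • Cop A s
      = cfc (fun x : ℝ => t * sinc (t * Real.sqrt x) - s * sinc (s * Real.sqrt x)
          - (t - s) * Real.cos (s * Real.sqrt x)) A := by
    rw [cfc_sub (fun x : ℝ => t * sinc (t * Real.sqrt x) - s * sinc (s * Real.sqrt x))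
          (fun x : ℝ => (t - s) * Real.cos (s * Real.sqrt x)) A (((cont_g t).sub (cont_g s)).continuousOn)
        ((continuous_const.mul (cont_c s)).continuousOn),
      cfc_sub _ _ A ((cont_g t).continuousOn) ((cont_g s).continuousOn),
      cfc_const_mul _ _ A ((cont_c s).continuousOn)]
    rfl
  rw [e1]
  refine norm_cfc_le (by positivity) fun x hx => ?_
  rw [Real.norm_eq_abs]
  refine (taylor_g (Real.sqrt x) s t).trans ?_
  have hxb : Real.sqrt x ≤ Real.sqrt (‖A‖ * ‖(1 : H →L[ℂ] H)‖) :=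
    Real.sqrt_le_sqrt ((le_abs_self x).trans (spec_bound hA x hx))
  have : |Real.sqrt x| = Real.sqrt x := abs_of_nonneg (Real.sqrt_nonneg x)
  rw [this]
  exact mul_le_mul_of_nonneg_right hxb (sq_nonneg _)

lemma cfc_mul_id (hspec : ∀ x ∈ spectrum ℝ A, 0 ≤ x) (s : ℝ) :
    cfc (fun x : ℝ => Real.sqrt x ^ 2 * (s * sinc (s * Real.sqrt x))) A = A * Sop A s := by
  have e1 : cfc (fun x : ℝ => Real.sqrt x ^ 2 * (s * sinc (s * Real.sqrt x))) A
      = cfc (fun x : ℝ => x * (s * sinc (s * Real.sqrt x))) A := by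
    refine cfc_congr fun x hx => ?_
    rw [Real.sq_sqrt (hspec x hx)]
  rw [e1, cfc_mul (fun x : ℝ => x) (fun x : ℝ => s * sinc (s * Real.sqrt x)) A
    continuous_id.continuousOn ((cont_g s).continuousOn), cfc_id' ℝ A]
  rfl

lemma key2 (hspec : ∀ x ∈ spectrum ℝ A, 0 ≤ x) (s t : ℝ) :
    ‖Cop A t - Cop A s + (t - s) • (A * Sop A s)‖
      ≤ (‖A‖ * ‖(1 : H →L[ℂ] H)‖) * (t - s) ^ 2 := by
  have hc2 : Continuous fun x : ℝ => Real.sqrt x ^ 2 * (s * sinc (s * Real.sqrt x)) :=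
    ((Real.continuous_sqrt.pow 2).mul (cont_g s))
  have e1 : Cop A t - Cop A s + (t - s) • (A * Sop A s)
      = cfc (fun x : ℝ => Real.cos (t * Real.sqrt x) - Real.cos (s * Real.sqrt x)
          + (t - s) * (Real.sqrt x ^ 2 * (s * sinc (s * Real.sqrt x)))) A := by
    rw [cfc_add (a := A) (fun x : ℝ => Real.cos (t * Real.sqrt x) - Real.cos (s * Real.sqrt x))
          (fun x : ℝ => (t - s) * (Real.sqrt x ^ 2 * (s * sinc (s * Real.sqrt x)))) (((cont_c t).sub (cont_c s)).continuousOn)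
        ((continuous_const.mul hc2).continuousOn),
      cfc_sub _ _ A ((cont_c t).continuousOn) ((cont_c s).continuousOn),
      cfc_const_mul _ _ A hc2.continuousOn, cfc_mul_id hA hspec s]
    rfl
  rw [e1]
  have h1 : (0:ℝ) ≤ ‖A‖ * ‖(1 : H →L[ℂ] H)‖ := by positivity
  refine norm_cfc_le (by positivity) fun x hx => ?_
  rw [Real.norm_eq_abs]
  refine (taylor_c (Real.sqrt x) s t).trans ?_
  have hxb : Real.sqrt x ^ 2 ≤ ‖A‖ * ‖(1 : H →L[ℂ] H)‖ := by
    rw [Real.sq_sqrt (hspec x hx)]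
    exact (le_abs_self x).trans (spec_bound hA x hx)
  exact mul_le_mul_of_nonneg_right hxb (sq_nonneg _)

lemma hasDerivAt_Sop (t : ℝ) : HasDerivAt (Sop A) (Cop A t) t :=
  hasDerivAt_of_sq_bound fun t' => key1 hA t t'

lemma hasDerivAt_Cop (hspec : ∀ x ∈ spectrum ℝ A, 0 ≤ x) (t : ℝ) :
    HasDerivAt (Cop A) (-(A * Sop A t)) t := by
  have h : ∀ t' : ℝ, ‖Cop A t' - Cop A t - (t' - t) • (-(A * Sop A t))‖
      ≤ (‖A‖ * ‖(1 : H →L[ℂ] H)‖) * (t' - t) ^ 2 := by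
    intro t'
    rw [smul_neg, sub_neg_eq_add]
    exact key2 hA hspec t t'
  exact hasDerivAt_of_sq_bound h

end AbsCausal

open scoped InnerProductSpace
open MeasureTheory

/-- The causal propagator `G = G⁺ − G⁻` for the abstract wave equation: for a positive
bounded self-adjoint operator `A` and a continuous compactly supported source `f`,
`(G f)(t) = ∫_ℝ S(t−s) f(s) ds` is a `C²` solution of the homogeneous equation
`w″ = −A w`, and it equals the difference of the retarded and advanced solutions. -/
theorem abstract_causal_propagator {H : Type*} [NormedAddCommGroup H]
    [InnerProductSpace ℂ H] [CompleteSpace H]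
    (A : H →L[ℂ] H) (hA : IsSelfAdjoint A) (hpos : ∀ w : H, 0 ≤ (⟪A w, w⟫_ℂ).re)
    (S : ℝ → H →L[ℂ] H)
    (hS : ∀ t : ℝ, S t = cfc (fun x : ℝ =>
      if x = 0 then t else Real.sin (t * Real.sqrt x) / Real.sqrt x) A)
    (f : ℝ → H) (hf : Continuous f) (hfc : HasCompactSupport f)
    (G u v : ℝ → H)
    (hG : ∀ t : ℝ, G t = ∫ s : ℝ, (S (t - s)) (f s))
    (hu : ∀ t : ℝ, u t = ∫ s in Set.Iic t, (S (t - s)) (f s))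
    (hv : ∀ t : ℝ, v t = -∫ s in Set.Ici t, (S (t - s)) (f s)) :
    ContDiff ℝ 2 G ∧ (∀ t : ℝ, deriv (deriv G) t = -(A (G t))) ∧
      (∀ t : ℝ, G t = u t - v t) := by
  classical
  have hP : A.IsPositive := by
    refine ⟨ContinuousLinearMap.isSelfAdjoint_iff_isSymmetric.mp hA, fun w => ?_⟩
    simpa [ContinuousLinearMap.reApplyInnerSelf_apply, RCLike.re_to_complex] using hpos w
  have hspec : ∀ x ∈ spectrum ℝ A, 0 ≤ x := SpectrumRestricts.nnreal_iff.mp hP.spectrumRestricts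
  have hS' : ∀ τ : ℝ, S τ = AbsCausal.Sop A τ := by
    intro τ
    rw [hS τ, AbsCausal.Sop]
    refine cfc_congr fun x hx => ?_
    have hx0 : 0 ≤ x := hspec x hx
    rcases eq_or_ne x 0 with rfl | hxne
    · simp [AbsCausal.sinc]
    · have hxpos : 0 < x := lt_of_le_of_ne hx0 (Ne.symm hxne)
      have hsx : Real.sqrt x ≠ 0 := ne_of_gt (Real.sqrt_pos.mpr hxpos)
      simp only [if_neg hxne]
      rcases eq_or_ne τ 0 with rfl | hτ
      · simp [AbsCausal.sinc]
      · have hτx : τ * Real.sqrt x ≠ 0 := mul_ne_zero hτ hsx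
        rw [AbsCausal.sinc, if_neg hτx]
        field_simp
  have contS : Continuous (AbsCausal.Sop A) := by
    rw [continuous_iff_continuousAt]
    exact fun t => (AbsCausal.hasDerivAt_Sop hA t).continuousAt
  have contk : ∀ t : ℝ, Continuous fun s : ℝ => AbsCausal.Sop A (t - s) (f s) := fun t =>
    ((contS.comp (continuous_const.sub continuous_id)).clm_apply hf)
  have contC : Continuous (AbsCausal.Cop A) := by
    rw [continuous_iff_continuousAt]
    exact fun t => (AbsCausal.hasDerivAt_Cop hA hspec t).continuousAt
  have contkC : ∀ t : ℝ, Continuous fun s : ℝ => AbsCausal.Cop A (t - s) (f s) := fun t =>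
    ((contC.comp (continuous_const.sub continuous_id)).clm_apply hf)
  have hck : ∀ t : ℝ, HasCompactSupport fun s : ℝ => AbsCausal.Sop A (t - s) (f s) := by
    intro t
    refine hfc.mono fun s hs => ?_
    simp only [Function.mem_support] at hs ⊢
    intro h0
    exact hs (by rw [h0, map_zero])
  have intk : ∀ t : ℝ, Integrable (fun s : ℝ => AbsCausal.Sop A (t - s) (f s)) := fun t =>
    (contk t).integrable_of_hasCompactSupport (hck t)
  have hGeq : G = fun t : ℝ => ∫ s : ℝ, AbsCausal.Sop A (t - s) (f s) := by
    funext t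
    rw [hG t]
    simp only [hS']
  -- first derivative
  have hd1 : ∀ t₀ : ℝ, HasDerivAt (fun t : ℝ => ∫ s : ℝ, AbsCausal.Sop A (t - s) (f s))
      (∫ s : ℝ, AbsCausal.Cop A (t₀ - s) (f s)) t₀ := by
    intro t₀
    have key := hasDerivAt_integral_of_dominated_loc_of_deriv_le (μ := volume) (x₀ := t₀)
      (F := fun (t : ℝ) (s : ℝ) => AbsCausal.Sop A (t - s) (f s))
      (F' := fun (t : ℝ) (s : ℝ) => AbsCausal.Cop A (t - s) (f s))
      (bound := fun s : ℝ => ‖f s‖) (Metric.ball_mem_nhds t₀ one_pos)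
      (Filter.Eventually.of_forall fun t => (contk t).aestronglyMeasurable)
      (intk t₀)
      ((contkC t₀).aestronglyMeasurable)
      (Filter.Eventually.of_forall fun s t _ => ?_)
      ((hf.norm).integrable_of_hasCompactSupport hfc.norm)
      (Filter.Eventually.of_forall fun s t _ => ?_)
    · exact key.2
    · calc ‖AbsCausal.Cop A (t - s) (f s)‖ ≤ ‖AbsCausal.Cop A (t - s)‖ * ‖f s‖ :=
            (AbsCausal.Cop A (t - s)).le_opNorm (f s)
        _ ≤ 1 * ‖f s‖ :=
            mul_le_mul_of_nonneg_right (AbsCausal.norm_Cop_le hA _) (norm_nonneg _)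
        _ = ‖f s‖ := one_mul _
    · have h1 : HasDerivAt (fun t : ℝ => AbsCausal.Sop A (t - s))
          (AbsCausal.Cop A (t - s)) t := by
        have h0 := (AbsCausal.hasDerivAt_Sop hA (t - s)).scomp (x := t)
          ((hasDerivAt_id t).sub_const s)
        simpa [Function.comp_def] using h0
      have h2 := (((ContinuousLinearMap.apply ℂ H (f s)).restrictScalars
        ℝ).hasFDerivAt.comp_hasDerivAt t h1)
      simpa [Function.comp_def] using h2
  -- second derivative
  have hd2 : ∀ t₀ : ℝ, HasDerivAt (fun t : ℝ => ∫ s : ℝ, AbsCausal.Cop A (t - s) (f s))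
      (∫ s : ℝ, -(A (AbsCausal.Sop A (t₀ - s) (f s)))) t₀ := by
    intro t₀
    have key := hasDerivAt_integral_of_dominated_loc_of_deriv_le (μ := volume) (x₀ := t₀)
      (F := fun (t : ℝ) (s : ℝ) => AbsCausal.Cop A (t - s) (f s))
      (F' := fun (t : ℝ) (s : ℝ) => -(A (AbsCausal.Sop A (t - s) (f s))))
      (bound := fun s : ℝ => ‖A‖ * ((|t₀| + 1 + |s|) * ‖f s‖)) (Metric.ball_mem_nhds t₀ one_pos)
      (Filter.Eventually.of_forall fun t => (contkC t).aestronglyMeasurable)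
      ((contkC t₀).integrable_of_hasCompactSupport (hfc.mono fun s hs => ?_))
      (((A.continuous.comp (contk t₀)).neg).aestronglyMeasurable)
      (Filter.Eventually.of_forall fun s t ht => ?_)
      ?_
      (Filter.Eventually.of_forall fun s t _ => ?_)
    · exact key.2
    · simp only [Function.mem_support] at hs ⊢
      intro h0
      exact hs (by rw [h0, map_zero])
    · rw [Metric.mem_ball, Real.dist_eq] at ht
      have htri : |t - s| ≤ |t₀| + 1 + |s| := by
        have h1 : |t - s| ≤ |t - t₀| + |t₀ - s| := abs_sub_le t t₀ s
        have h2 : |t₀ - s| ≤ |t₀| + |s| := by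
          rw [sub_eq_add_neg]
          exact (abs_add_le t₀ (-s)).trans (by rw [abs_neg])
        linarith
      rw [norm_neg]
      calc ‖A (AbsCausal.Sop A (t - s) (f s))‖
          ≤ ‖A‖ * ‖AbsCausal.Sop A (t - s) (f s)‖ := A.le_opNorm _
        _ ≤ ‖A‖ * (‖AbsCausal.Sop A (t - s)‖ * ‖f s‖) := by
            gcongr
            exact (AbsCausal.Sop A (t - s)).le_opNorm _
        _ ≤ ‖A‖ * ((|t₀| + 1 + |s|) * ‖f s‖) := by
            gcongr
            exact (AbsCausal.norm_Sop_le hA _).trans htri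
    · refine Continuous.integrable_of_hasCompactSupport ?_ (hfc.norm.mono fun s hs => ?_)
      · exact continuous_const.mul (((continuous_const.add continuous_abs)).mul hf.norm)
      · simp only [Function.mem_support] at hs ⊢
        intro h0
        apply hs
        rw [h0]
        simp
    · have h1 : HasDerivAt (fun t : ℝ => AbsCausal.Cop A (t - s))
          (-(A * AbsCausal.Sop A (t - s))) t := by
        have h0 := (AbsCausal.hasDerivAt_Cop hA hspec (t - s)).scomp (x := t)
          ((hasDerivAt_id t).sub_const s)
        simpa [Function.comp_def] using h0
      have h2 := (((ContinuousLinearMap.apply ℂ H (f s)).restrictScalars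
        ℝ).hasFDerivAt.comp_hasDerivAt t h1)
      simpa [ContinuousLinearMap.neg_apply, ContinuousLinearMap.mul_apply, Function.comp_def] using h2
  set G1 : ℝ → H := fun t => ∫ s : ℝ, AbsCausal.Cop A (t - s) (f s) with hG1def
  have hG1 : ∀ t : ℝ, HasDerivAt G (G1 t) t := by
    intro t
    rw [hGeq]
    exact hd1 t
  have hderivG : deriv G = G1 := funext fun t => (hG1 t).deriv
  have hint2 : ∀ t : ℝ, (∫ s : ℝ, -(A (AbsCausal.Sop A (t - s) (f s)))) = -(A (G t)) := by
    intro t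
    rw [integral_neg, A.integral_comp_comm (intk t)]
    rw [hGeq]
  have hG2 : ∀ t : ℝ, HasDerivAt G1 (-(A (G t))) t := fun t => (hint2 t) ▸ hd2 t
  have hdd : ∀ t : ℝ, deriv (deriv G) t = -(A (G t)) := by
    intro t
    rw [hderivG]
    exact (hG2 t).deriv
  have contG : Continuous G := by
    rw [continuous_iff_continuousAt]
    exact fun t => (hG1 t).continuousAt
  refine ⟨?_, hdd, ?_⟩
  · rw [show (2 : WithTop ℕ∞) = 1 + 1 from rfl, contDiff_succ_iff_deriv]
    refine ⟨fun t => (hG1 t).differentiableAt, ?_, ?_⟩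
    · intro h
      exact absurd h (by simp)
    · rw [hderivG, contDiff_one_iff_deriv]
      refine ⟨fun t => (hG2 t).differentiableAt, ?_⟩
      have hd : deriv G1 = fun t => -(A (G t)) := funext fun t => (hG2 t).deriv
      rw [hd]
      exact (A.continuous.comp contG).neg
  · intro t
    rw [hu t, hv t, sub_neg_eq_add, hG t]
    simp only [hS']
    rw [MeasureTheory.integral_Ici_eq_integral_Ioi]
    exact (intervalIntegral.integral_Iic_add_Ioi ((intk t).integrableOn)
      ((intk t).integrableOn)).symm
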